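/- Suppose m, n are natural numbers with m ≥ 1, T is a real with T ≥ √(mn) and T > 0, and a, b are reals with a ≥ b ≥ 0. Let v : Fin m → ℝ satisfy 1 ≤ v_j ≤ T for all j, let j* be an index maximizing v, let H := {j : v_j = T} ∪ {j*}, and let L := {j : v_j ≥ mn/T} \ H. Then for every nonempty finite set H' ⊆ Fin m and every finite set L' ⊆ Fin m with L' ∩ H' = ∅, one has U(H, L) ≥ U(H', L'). -/

import Mathlib

open scoped Classical

/-- The menu-option utility of a bidder with values `v : Fin m → ℝ` for a pair `(H', L')`
of (disjoint) finite subsets of `Fin m`: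
`U(H', L') = a·Σ_{j ∈ H'} v_j + b·Σ_{j ∈ L'} v_j
  − (|H'|·a·T + |L'|·b·(mn/T) − (|H'| − 1)·b·(T − mn/T))`. -/
noncomputable def menuUtility (m n : ℕ) (a b T : ℝ) (v : Fin m → ℝ)
    (H' L' : Finset (Fin m)) : ℝ :=
  a * ∑ j ∈ H', v j + b * ∑ j ∈ L', v j -
    ((H'.card : ℝ) * a * T + (L'.card : ℝ) * b * ((m * n : ℝ) / T) -
      ((H'.card : ℝ) - 1) * b * (T - (m * n : ℝ) / T))

/-- with `H := {j : v_j = T} ∪ {j*}` and `L := {j : v_j ≥ mn/T} \ H`, a bidder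
with type `v` prefers the menu option `(H, L)` over any menu option `(H', L')` with `H'`
nonempty and `L'` disjoint from `H'`. -/
theorem preferred_option (m n : ℕ) (hm : 1 ≤ m) (T : ℝ)
    (hT : Real.sqrt (m * n) ≤ T) (hT0 : 0 < T)
    (a b : ℝ) (hab : b ≤ a) (hb : 0 ≤ b)
    (v : Fin m → ℝ) (hv : ∀ j, 1 ≤ v j ∧ v j ≤ T)
    (jstar : Fin m) (hjstar : ∀ j, v j ≤ v jstar)
    (H L : Finset (Fin m))
    (hH : H = (Finset.univ.filter fun j => v j = T) ∪ {jstar})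
    (hL : L = (Finset.univ.filter fun j => (m * n : ℝ) / T ≤ v j) \ H) :
    ∀ H' : Finset (Fin m), H'.Nonempty → ∀ L' : Finset (Fin m), L' ∩ H' = ∅ →
      menuUtility m n a b T v H' L' ≤ menuUtility m n a b T v H L := by
  intro H' hH'ne L' hdisj'
  have hdisj : Disjoint L' H' := Finset.disjoint_iff_inter_eq_empty.mpr hdisj'
  have ha : 0 ≤ a := hb.trans hab
  set μ : ℝ := (m * n : ℝ) / T with hμdef
  have hmn0 : (0:ℝ) ≤ (m * n : ℝ) := by positivity
  have hμT : μ ≤ T := by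
    rw [hμdef, div_le_iff₀ hT0]
    nlinarith [Real.mul_self_sqrt hmn0, Real.sqrt_nonneg ((m:ℝ) * n)]
  set p : Fin m → ℝ := fun j => a * (v j - T) with hpdef
  set h : Fin m → ℝ := fun j => b * (v j - μ) with hhdef
  set β : ℝ := b * (T - μ) with hβdef
  have hβ0 : 0 ≤ β := mul_nonneg hb (by linarith)
  -- rewrite of the utility
  have hrw : ∀ A B : Finset (Fin m), menuUtility m n a b T v A B
      = ((∑ j ∈ A, (p j + β)) + ∑ j ∈ B, h j) - β := by
    intro A B
    have e1 : ∑ j ∈ A, (p j + β) = a * ∑ j ∈ A, v j + (A.card : ℝ) * (β - a * T) := by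
      rw [Finset.sum_add_distrib, Finset.sum_const, nsmul_eq_mul, Finset.mul_sum]
      rw [Finset.sum_congr rfl (fun j _ => (mul_sub a (v j) T : p j = a * v j - a * T)),
        Finset.sum_sub_distrib, Finset.sum_const, nsmul_eq_mul]
      ring
    have e2 : ∑ j ∈ B, h j = b * ∑ j ∈ B, v j - (B.card : ℝ) * (b * μ) := by
      rw [Finset.mul_sum,
        Finset.sum_congr rfl (fun j _ => (mul_sub b (v j) μ : h j = b * v j - b * μ)),
        Finset.sum_sub_distrib, Finset.sum_const, nsmul_eq_mul]
    rw [e1, e2]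
    simp only [menuUtility, ← hμdef, ← hβdef]
    ring
  have hpβ : ∀ j, p j + β ≤ max (h j) 0 := by
    intro j
    have h2 := (hv j).2
    have h1 : p j + β ≤ h j := by
      simp only [hpdef, hhdef, hβdef]
      nlinarith
    exact h1.trans (le_max_left _ _)
  -- generic bound for sums over disjoint sets
  have hbound : ∀ s A B : Finset (Fin m), Disjoint A B → A ∪ B ⊆ s →
      (∑ j ∈ A, (p j + β)) + ∑ j ∈ B, h j ≤ ∑ j ∈ s, max (h j) 0 := by
    intro s A B hAB hsub
    calc (∑ j ∈ A, (p j + β)) + ∑ j ∈ B, h j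
        ≤ (∑ j ∈ A, max (h j) 0) + ∑ j ∈ B, max (h j) 0 :=
          add_le_add (Finset.sum_le_sum fun j _ => hpβ j)
            (Finset.sum_le_sum fun j _ => le_max_left _ _)
      _ = ∑ j ∈ A ∪ B, max (h j) 0 := (Finset.sum_union hAB).symm
      _ ≤ ∑ j ∈ s, max (h j) 0 :=
          Finset.sum_le_sum_of_subset_of_nonneg hsub fun j _ _ => le_max_right _ _
  -- the value of the chosen option
  set Q : Finset (Fin m) := Finset.univ.filter fun j => μ ≤ v j with hQdef
  have hHQL : L = Q \ H := hL
  have hmaxzero : ∀ j, j ∉ Q → max (h j) 0 = 0 := by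
    intro j hj
    have : ¬ (μ ≤ v j) := by simpa [hQdef] using hj
    have : h j ≤ 0 := mul_nonpos_of_nonneg_of_nonpos hb (by linarith)
    exact max_eq_right this
  have hQpos : ∀ j, j ∈ Q → max (h j) 0 = h j := by
    intro j hj
    have : μ ≤ v j := by simpa [hQdef] using hj
    exact max_eq_left (mul_nonneg hb (by linarith))
  have hUHL : menuUtility m n a b T v H L
      = p jstar + ∑ j ∈ Finset.univ.erase jstar, max (h j) 0 := by
    rw [hrw]
    by_cases hvj : v jstar = T
    · -- jstar is in the top set
      have hjS : jstar ∈ Finset.univ.filter fun j => v j = T := by simp [hvj]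
      have hHS : H = Finset.univ.filter fun j => v j = T := by
        rw [hH, Finset.union_eq_left]
        simpa using hjS
      have hHsubQ : H ⊆ Q := by
        intro j hj
        have : v j = T := by simpa [hHS] using hj
        simp [hQdef, this, hμT]
      have hsumH : ∑ j ∈ H, (p j + β) = ∑ j ∈ H, max (h j) 0 := by
        refine Finset.sum_congr rfl fun j hj => ?_
        have hjT : v j = T := by simpa [hHS] using hj
        have : h j = β := by simp [hhdef, hβdef, hjT]
        simp [hpdef, hjT, this, max_eq_left hβ0]
      have hsumL : ∑ j ∈ L, h j = ∑ j ∈ L, max (h j) 0 := by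
        refine Finset.sum_congr rfl fun j hj => ?_
        have hjQ : j ∈ Q := (Finset.sdiff_subset (by rw [← hHQL] ; exact hj) : j ∈ Q)
        exact (hQpos j hjQ).symm
      have hdisjHL : Disjoint H L := by
        rw [hHQL]; exact Finset.disjoint_sdiff
      have hunion : H ∪ L = Q := by
        rw [hHQL]; exact Finset.union_sdiff_of_subset hHsubQ
      have hQuniv : ∑ j ∈ Q, max (h j) 0 = ∑ j ∈ Finset.univ, max (h j) 0 :=
        Finset.sum_subset (Finset.subset_univ Q) fun j _ hj => hmaxzero j hj
      have hsplit : ∑ j ∈ Finset.univ, max (h j) 0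
          = max (h jstar) 0 + ∑ j ∈ Finset.univ.erase jstar, max (h j) 0 :=
        (Finset.add_sum_erase _ _ (Finset.mem_univ jstar)).symm
      have hhjstar : max (h jstar) 0 = β := by
        rw [max_eq_left]
        · simp [hhdef, hβdef, hvj]
        · rw [hhdef]; simp only; rw [hvj, ← hβdef] at *; nlinarith
      have hpjstar : p jstar = 0 := by simp [hpdef, hvj]
      rw [hsumH, hsumL, ← Finset.sum_union hdisjHL, hunion, hQuniv, hsplit, hhjstar, hpjstar]
      ring
    · -- no value equals T, so H = {jstar}
      have hSempty : (Finset.univ.filter fun j => v j = T) = ∅ := by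
        refine Finset.filter_eq_empty_iff.mpr fun j _ => ?_
        intro hjT
        exact hvj (le_antisymm (hv jstar).2 (hjT ▸ hjstar j))
      have hHsing : H = {jstar} := by rw [hH, hSempty, Finset.empty_union]
      have hLQ : L = Q.erase jstar := by
        rw [hHQL, hHsing, ← Finset.erase_eq]
      have hsumL : ∑ j ∈ L, h j = ∑ j ∈ Q.erase jstar, max (h j) 0 := by
        rw [hLQ]
        exact Finset.sum_congr rfl fun j hj => (hQpos j (Finset.mem_of_mem_erase hj)).symm
      have hQerase : ∑ j ∈ Q.erase jstar, max (h j) 0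
          = ∑ j ∈ Finset.univ.erase jstar, max (h j) 0 := by
        refine Finset.sum_subset (Finset.erase_subset_erase _ (Finset.subset_univ Q)) ?_
        intro j hj hj'
        refine hmaxzero j fun hjQ => hj' (Finset.mem_erase.mpr ⟨(Finset.mem_erase.mp hj).1, hjQ⟩)
      rw [hHsing, hsumL, hQerase, Finset.sum_singleton]
      ring
  -- main bound
  rw [hrw H' L', hUHL]
  have key : (∑ j ∈ H', (p j + β)) + ∑ j ∈ L', h j
      ≤ (p jstar + ∑ j ∈ Finset.univ.erase jstar, max (h j) 0) + β := by
    by_cases hjsL : jstar ∈ L'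
    · -- jstar sits in L'
      obtain ⟨j0, hj0⟩ := hH'ne
      have hj0ne : j0 ≠ jstar := fun e => (Finset.disjoint_left.mp hdisj hjsL) (e ▸ hj0)
      have hsplitH : ∑ j ∈ H', (p j + β)
          = (p j0 + β) + ∑ j ∈ H'.erase j0, (p j + β) :=
        (Finset.add_sum_erase _ _ hj0).symm
      have hsplitL : ∑ j ∈ L', h j = h jstar + ∑ j ∈ L'.erase jstar, h j :=
        (Finset.add_sum_erase _ _ hjsL).symm
      have hsub : (H'.erase j0) ∪ (L'.erase jstar) ⊆ (Finset.univ.erase jstar).erase j0 := by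
        intro x hx
        rcases Finset.mem_union.mp hx with hx | hx
        · obtain ⟨hxj0, hxH⟩ := Finset.mem_erase.mp hx
          refine Finset.mem_erase.mpr ⟨hxj0, Finset.mem_erase.mpr ⟨?_, Finset.mem_univ _⟩⟩
          exact fun e => (Finset.disjoint_left.mp hdisj hjsL) (e ▸ hxH)
        · obtain ⟨hxjs, hxL⟩ := Finset.mem_erase.mp hx
          refine Finset.mem_erase.mpr ⟨?_, Finset.mem_erase.mpr ⟨hxjs, Finset.mem_univ _⟩⟩
          exact fun e => (Finset.disjoint_left.mp hdisj hxL) (e ▸ hj0)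
      have hABdisj : Disjoint (H'.erase j0) (L'.erase jstar) :=
        (hdisj.symm.mono (Finset.erase_subset _ _) (Finset.erase_subset _ _))
      have hb1 := hbound ((Finset.univ.erase jstar).erase j0) _ _ hABdisj hsub
      have hkey2 : p j0 + h jstar ≤ p jstar + max (h j0) 0 := by
        have h1 : p j0 + h jstar ≤ p jstar + h j0 := by
          simp only [hpdef, hhdef]
          nlinarith [hjstar j0]
        exact h1.trans (add_le_add_right (le_max_left _ _) _)
      have hsplitU : ∑ j ∈ Finset.univ.erase jstar, max (h j) 0
          = max (h j0) 0 + ∑ j ∈ (Finset.univ.erase jstar).erase j0, max (h j) 0 :=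
        (Finset.add_sum_erase _ _ (Finset.mem_erase.mpr ⟨hj0ne, Finset.mem_univ _⟩)).symm
      rw [hsplitH, hsplitL, hsplitU]
      linarith
    · -- jstar not in L'
      obtain ⟨j0, hj0, hj0p⟩ : ∃ j0 ∈ H', jstar ∈ H' → j0 = jstar := by
        by_cases hjsH : jstar ∈ H'
        · exact ⟨jstar, hjsH, fun _ => rfl⟩
        · obtain ⟨j0, hj0⟩ := hH'ne
          exact ⟨j0, hj0, fun hc => absurd hc hjsH⟩
      have hsplitH : ∑ j ∈ H', (p j + β)
          = (p j0 + β) + ∑ j ∈ H'.erase j0, (p j + β) :=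
        (Finset.add_sum_erase _ _ hj0).symm
      have hsub : (H'.erase j0) ∪ L' ⊆ Finset.univ.erase jstar := by
        intro x hx
        rcases Finset.mem_union.mp hx with hx | hx
        · obtain ⟨hxj0, hxH⟩ := Finset.mem_erase.mp hx
          refine Finset.mem_erase.mpr ⟨fun e => ?_, Finset.mem_univ _⟩
          exact hxj0 (e.symm ▸ (hj0p (e ▸ hxH)).symm ▸ rfl : x = j0)
        · refine Finset.mem_erase.mpr ⟨fun e => hjsL (e ▸ hx), Finset.mem_univ _⟩
      have hABdisj : Disjoint (H'.erase j0) L' :=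
        (hdisj.symm.mono (Finset.erase_subset _ _) le_rfl)
      have hb1 := hbound (Finset.univ.erase jstar) _ _ hABdisj hsub
      have hpj0 : p j0 ≤ p jstar := by
        simp only [hpdef]
        nlinarith [hjstar j0]
      rw [hsplitH]
      linarith
  linarith
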